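/- The region Ω = {(L,P,A₁,A₂) ∈ ℝ⁴₊ : L ≤ b/(e·c₁), P ≤ (1-μ_l)·b/(e·c₁), A₁ ≤ (1-μ_l)(1-μ_p)·b/(e·c₁)} is forward invariant under the LPAA map in its first three coordinates: if the state lies in Ω at time t, then the L, P, A₁ coordinates at time t+1 also satisfy these bounds. -/

import Mathlib

open Real

theorem stmt_4 (b c₁ c₂ μl μp μa : ℝ)
    (hb : 0 < b) (hc₁ : 0 < c₁) (hc₂ : 0 ≤ c₂)
    (hμl : μl ∈ Set.Ioo (0:ℝ) 1) (hμp : μp ∈ Set.Ioo (0:ℝ) 1) (hμa : μa ∈ Set.Ioo (0:ℝ) 1)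
    (L P A₁ A₂ : ℝ)
    (hLnn : 0 ≤ L) (hPnn : 0 ≤ P) (hA₁nn : 0 ≤ A₁) (hA₂nn : 0 ≤ A₂)
    (hLb : L ≤ b / (Real.exp 1 * c₁))
    (hPb : P ≤ (1 - μl) * b / (Real.exp 1 * c₁))
    (hA₁b : A₁ ≤ (1 - μl) * (1 - μp) * b / (Real.exp 1 * c₁)) :
    b * A₂ * Real.exp (-c₁ * A₂) ≤ b / (Real.exp 1 * c₁) ∧
    (1 - μl) * L ≤ (1 - μl) * b / (Real.exp 1 * c₁) ∧
    (1 - μp) * P ≤ (1 - μl) * (1 - μp) * b / (Real.exp 1 * c₁) := by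
  obtain ⟨hμl0, hμl1⟩ := hμl
  obtain ⟨hμp0, hμp1⟩ := hμp
  have he : (0:ℝ) < Real.exp 1 := Real.exp_pos 1
  refine ⟨?_, ?_, ?_⟩
  · -- key: c₁ A₂ exp(-c₁A₂) ≤ 1/e
    have h1 : c₁ * A₂ ≤ Real.exp (c₁ * A₂ - 1) := by
      have := Real.add_one_le_exp (c₁ * A₂ - 1)
      linarith
    have h2 : c₁ * A₂ * Real.exp (-(c₁ * A₂)) ≤ Real.exp (-1) := by
      calc c₁ * A₂ * Real.exp (-(c₁ * A₂))
          ≤ Real.exp (c₁ * A₂ - 1) * Real.exp (-(c₁ * A₂)) := by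
            exact mul_le_mul_of_nonneg_right h1 (Real.exp_nonneg _)
        _ = Real.exp (-1) := by rw [← Real.exp_add]; ring_nf
    have h2' : c₁ * A₂ * Real.exp (-(c₁ * A₂)) ≤ (Real.exp 1)⁻¹ := by
      rw [← Real.exp_neg]; exact h2
    have hbc : 0 ≤ b / c₁ := div_nonneg hb.le hc₁.le
    have heq : b * A₂ * Real.exp (-c₁ * A₂) = (b / c₁) * (c₁ * A₂ * Real.exp (-(c₁ * A₂))) := by
      field_simp
    rw [heq]
    calc (b / c₁) * (c₁ * A₂ * Real.exp (-(c₁ * A₂))) ≤ (b / c₁) * (Real.exp 1)⁻¹ :=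
          mul_le_mul_of_nonneg_left h2' hbc
      _ = b / (Real.exp 1 * c₁) := by rw [← div_div]; field_simp
  · have := mul_le_mul_of_nonneg_left hLb (by linarith : (0:ℝ) ≤ 1 - μl)
    calc (1 - μl) * L ≤ (1 - μl) * (b / (Real.exp 1 * c₁)) := this
      _ = (1 - μl) * b / (Real.exp 1 * c₁) := by ring
  · have := mul_le_mul_of_nonneg_left hPb (by linarith : (0:ℝ) ≤ 1 - μp)
    calc (1 - μp) * P ≤ (1 - μp) * ((1 - μl) * b / (Real.exp 1 * c₁)) := this
      _ = (1 - μl) * (1 - μp) * b / (Real.exp 1 * c₁) := by ring
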